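/- Let R be an algebraic curvature tensor on ℝⁿ (n ≥ 4) all of whose sectional curvatures lie in the interval (1, 4]. Then R has positive isotropic curvature, i.e. for every orthonormal four-frame {e₁,e₂,e₃,e₄}, R₁₃₁₃ + R₁₄₁₄ + R₂₃₂₃ + R₂₄₂₄ - 2R₁₂₃₄ > 0. -/

import Mathlib

set_option maxHeartbeats 1000000

/-- An algebraic curvature tensor on ℝⁿ (n ≥ 4) whose sectional curvatures lie in (1,4]
has positive isotropic curvature. -/

theorem stmt_1 (n : ℕ) (hn : 4 ≤ n)
    (R : EuclideanSpace ℝ (Fin n) →ₗ[ℝ] EuclideanSpace ℝ (Fin n) →ₗ[ℝ]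
      EuclideanSpace ℝ (Fin n) →ₗ[ℝ] EuclideanSpace ℝ (Fin n) →ₗ[ℝ] ℝ)
    (hanti : ∀ x y z w, R x y z w = - R y x z w)
    (hpair : ∀ x y z w, R x y z w = R z w x y)
    (hbianchi : ∀ x y z w, R x y z w + R y z x w + R z x y w = 0)
    (hsec : ∀ x y : EuclideanSpace ℝ (Fin n),
      (inner ℝ x x : ℝ) = 1 → (inner ℝ y y : ℝ) = 1 → (inner ℝ x y : ℝ) = 0 →
      1 < R x y x y ∧ R x y x y ≤ 4) :
    ∀ e : Fin 4 → EuclideanSpace ℝ (Fin n), Orthonormal ℝ e →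
      0 < R (e 0) (e 2) (e 0) (e 2) + R (e 0) (e 3) (e 0) (e 3)
        + R (e 1) (e 2) (e 1) (e 2) + R (e 1) (e 3) (e 1) (e 3)
        - 2 * R (e 0) (e 1) (e 2) (e 3) := by
  intro e he
  have hinner : ∀ i j : Fin 4, (inner ℝ (e i) (e j) : ℝ) = if i = j then 1 else 0 :=
    orthonormal_iff_ite.mp he
  set x := e 0 with hx
  set y := e 1 with hy
  set z := e 2 with hz
  set w := e 3 with hw
  have hxx : (inner ℝ x x : ℝ) = 1 := by simpa using hinner 0 0
  have hyy : (inner ℝ y y : ℝ) = 1 := by simpa using hinner 1 1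
  have hzz : (inner ℝ z z : ℝ) = 1 := by simpa using hinner 2 2
  have hww : (inner ℝ w w : ℝ) = 1 := by simpa using hinner 3 3
  have hxy : (inner ℝ x y : ℝ) = 0 := by simpa using hinner 0 1
  have hxz : (inner ℝ x z : ℝ) = 0 := by simpa using hinner 0 2
  have hxw : (inner ℝ x w : ℝ) = 0 := by simpa using hinner 0 3
  have hyz : (inner ℝ y z : ℝ) = 0 := by simpa using hinner 1 2
  have hyw : (inner ℝ y w : ℝ) = 0 := by simpa using hinner 1 3
  have hzw : (inner ℝ z w : ℝ) = 0 := by simpa using hinner 2 3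
  have hzx : (inner ℝ z x : ℝ) = 0 := by simpa using hinner 2 0
  have hwx : (inner ℝ w x : ℝ) = 0 := by simpa using hinner 3 0
  have hzy : (inner ℝ z y : ℝ) = 0 := by simpa using hinner 2 1
  have hwy : (inner ℝ w y : ℝ) = 0 := by simpa using hinner 3 1
  have hwz : (inner ℝ w z : ℝ) = 0 := by simpa using hinner 3 2
  -- the four sectional curvature terms
  have h02 := hsec x z hxx hzz hxz
  have h03 := hsec x w hxx hww hxw
  have h12 := hsec y z hyy hzz hyz
  have h13 := hsec y w hyy hww hyw
  -- sectional bound for vectors of squared norm 2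
  have hsec2 : ∀ u v : EuclideanSpace ℝ (Fin n),
      (inner ℝ u u : ℝ) = 2 → (inner ℝ v v : ℝ) = 2 → (inner ℝ u v : ℝ) = 0 →
      4 < R u v u v ∧ R u v u v ≤ 16 := by
    intro u v hu hv huv
    set c : ℝ := (Real.sqrt 2)⁻¹ with hc
    have h2 : (Real.sqrt 2) ^ 2 = 2 := Real.sq_sqrt (by norm_num)
    have hs : Real.sqrt 2 ≠ 0 := by positivity
    have hcc : c * c = 1 / 2 := by
      rw [hc, ← mul_inv, Real.mul_self_sqrt (by norm_num : (0:ℝ) ≤ 2)]; norm_num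
    have h1 : (inner ℝ (c • u) (c • u) : ℝ) = 1 := by
      rw [real_inner_smul_left, real_inner_smul_right, hu]
      rw [show c * (c * 2) = c * c * 2 by ring, hcc]; norm_num
    have h1' : (inner ℝ (c • v) (c • v) : ℝ) = 1 := by
      rw [real_inner_smul_left, real_inner_smul_right, hv]
      rw [show c * (c * 2) = c * c * 2 by ring, hcc]; norm_num
    have h0 : (inner ℝ (c • u) (c • v) : ℝ) = 0 := by
      rw [real_inner_smul_left, real_inner_smul_right, huv]; ring
    have key := hsec (c • u) (c • v) h1 h1' h0
    have hR : R (c • u) (c • v) (c • u) (c • v) = c * (c * (c * (c * R u v u v))) := by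
      simp [map_smul, LinearMap.smul_apply, smul_eq_mul]
    rw [hR] at key
    have hc4 : c * (c * (c * (c * R u v u v))) = (c*c) * (c*c) * R u v u v := by ring
    rw [hc4, hcc] at key
    constructor <;> [linarith [key.1]; linarith [key.2]]
  -- inner products of the polarized vectors
  have npp : (inner ℝ (x + z) (x + z) : ℝ) = 2 := by
    simp only [inner_add_left, inner_add_right, hxx, hzz, hxz, hzx]; norm_num
  have nmm : (inner ℝ (x - z) (x - z) : ℝ) = 2 := by
    simp only [inner_sub_left, inner_sub_right, hxx, hzz, hxz, hzx]; norm_num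
  have nyw : (inner ℝ (y + w) (y + w) : ℝ) = 2 := by
    simp only [inner_add_left, inner_add_right, hyy, hww, hyw, hwy]; norm_num
  have nyw' : (inner ℝ (y - w) (y - w) : ℝ) = 2 := by
    simp only [inner_sub_left, inner_sub_right, hyy, hww, hyw, hwy]; norm_num
  have nxw : (inner ℝ (x + w) (x + w) : ℝ) = 2 := by
    simp only [inner_add_left, inner_add_right, hxx, hww, hxw, hwx]; norm_num
  have nxw' : (inner ℝ (x - w) (x - w) : ℝ) = 2 := by
    simp only [inner_sub_left, inner_sub_right, hxx, hww, hxw, hwx]; norm_num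
  have nyz : (inner ℝ (y + z) (y + z) : ℝ) = 2 := by
    simp only [inner_add_left, inner_add_right, hyy, hzz, hyz, hzy]; norm_num
  have nyz' : (inner ℝ (y - z) (y - z) : ℝ) = 2 := by
    simp only [inner_sub_left, inner_sub_right, hyy, hzz, hyz, hzy]; norm_num
  have o1 : (inner ℝ (x + z) (y + w) : ℝ) = 0 := by
    simp only [inner_add_left, inner_add_right, hxy, hxw, hzy, hzw]; norm_num
  have o2 : (inner ℝ (x + z) (y - w) : ℝ) = 0 := by
    simp only [inner_add_left, inner_sub_right, hxy, hxw, hzy, hzw]; norm_num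
  have o3 : (inner ℝ (x - z) (y + w) : ℝ) = 0 := by
    simp only [inner_sub_left, inner_add_right, hxy, hxw, hzy, hzw]; norm_num
  have o4 : (inner ℝ (x - z) (y - w) : ℝ) = 0 := by
    simp only [inner_sub_left, inner_sub_right, hxy, hxw, hzy, hzw]; norm_num
  have o5 : (inner ℝ (x + w) (y + z) : ℝ) = 0 := by
    simp only [inner_add_left, inner_add_right, hxy, hxz, hwy, hwz]; norm_num
  have o6 : (inner ℝ (x + w) (y - z) : ℝ) = 0 := by
    simp only [inner_add_left, inner_sub_right, hxy, hxz, hwy, hwz]; norm_num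
  have o7 : (inner ℝ (x - w) (y + z) : ℝ) = 0 := by
    simp only [inner_sub_left, inner_add_right, hxy, hxz, hwy, hwz]; norm_num
  have o8 : (inner ℝ (x - w) (y - z) : ℝ) = 0 := by
    simp only [inner_sub_left, inner_sub_right, hxy, hxz, hwy, hwz]; norm_num
  -- bounds on the eight polarized sectional values
  have Fpp := hsec2 (x + z) (y + w) npp nyw o1
  have Fpm := hsec2 (x + z) (y - w) npp nyw' o2
  have Fmp := hsec2 (x - z) (y + w) nmm nyw o3
  have Fmm := hsec2 (x - z) (y - w) nmm nyw' o4
  have Gpp := hsec2 (x + w) (y + z) nxw nyz o5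
  have Gpm := hsec2 (x + w) (y - z) nxw nyz' o6
  have Gmp := hsec2 (x - w) (y + z) nxw' nyz o7
  have Gmm := hsec2 (x - w) (y - z) nxw' nyz' o8
  -- the two bracket identities (pure multilinearity + pair symmetry)
  have hf : R (x + z) (y + w) (x + z) (y + w) + R (x - z) (y - w) (x - z) (y - w)
      - R (x + z) (y - w) (x + z) (y - w) - R (x - z) (y + w) (x - z) (y + w)
      = 8 * R x y z w + 8 * R x w z y := by
    have hRs : ∀ a b c, R (x - z) a b c = R x a b c - R z a b c := by
      intro a b c
      rw [show x - z = x + (-1:ℝ) • z by rw [neg_one_smul, sub_eq_add_neg], map_add, map_smul]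
      simp only [LinearMap.add_apply, LinearMap.smul_apply, smul_eq_mul]
      ring
    simp only [hRs, map_add, map_sub, LinearMap.add_apply, LinearMap.sub_apply]
    linarith [hpair z w x y, hpair z y x w]
  have hg : R (x + w) (y + z) (x + w) (y + z) + R (x - w) (y - z) (x - w) (y - z)
      - R (x + w) (y - z) (x + w) (y - z) - R (x - w) (y + z) (x - w) (y + z)
      = 8 * R x y w z + 8 * R x z w y := by
    have hRs : ∀ a b c, R (x - w) a b c = R x a b c - R w a b c := by
      intro a b c
      rw [show x - w = x + (-1:ℝ) • w by rw [neg_one_smul, sub_eq_add_neg], map_add, map_smul]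
      simp only [LinearMap.add_apply, LinearMap.smul_apply, smul_eq_mul]
      ring
    simp only [hRs, map_add, map_sub, LinearMap.add_apply, LinearMap.sub_apply]
    linarith [hpair w z x y, hpair w y x z]
  -- algebraic curvature identities
  have fact1 : R x w z y = - R y z x w := by
    rw [hpair x w z y, hanti z y x w]
  have fact2 : R x z w y = R z x y w := by
    have e1 : R x z w y = R w y x z := hpair x z w y
    have e2 : R w y x z = - R y w x z := hanti w y x z
    have e3 : R y w x z = R x z y w := hpair y w x z
    have e4 : R x z y w = - R z x y w := hanti x z y w
    linarith
  have fact3 : R x y w z = - R x y z w := by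
    have e1 : R x y w z = R w z x y := hpair x y w z
    have e2 : R w z x y = - R z w x y := hanti w z x y
    have e3 : R z w x y = R x y z w := hpair z w x y
    linarith
  have hb := hbianchi x y z w
  -- Berger: 24 * R x y z w < 48
  have berger : R x y z w < 2 := by
    linarith [Fpp.2, Fmm.2, Fpm.1, Fmp.1, Gpp.1, Gmm.1, Gpm.2, Gmp.2]
  linarith [h02.1, h03.1, h12.1, h13.1, berger]
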